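/- arXiv:2004.06439 — 2 statements merged into one kernel-verified Lean document; each statement's English description precedes it below -/
import Mathlib

section
/- With the same setup as the matrix composition (C = B̃ ∘ (⊗_{i=1}^N Â_i) for symmetric B and matrices A_1,…,A_N), the largest eigenvalue satisfies λ_max(C) ≥ λ_max(B) · ∏_{i=1}^N ‖A_i‖, and the spectral norm satisfies ‖C‖ ≥ ‖B‖ · ∏_{i=1}^N ‖A_i‖. -/
open Matrix

/-- The spectral norm (largest singular value) of a real matrix. -/
noncomputable def matrixSpectralNorm {m n : Type*} [Fintype m] [Fintype n] [DecidableEq n]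
    (A : Matrix m n ℝ) : ℝ :=
  ‖LinearMap.toContinuousLinearMap (Matrix.toEuclideanLin A)‖

/-- The largest eigenvalue of a real symmetric matrix, characterized as the supremum of the
Rayleigh quotient `vᵀ A v` over unit vectors `v`. -/
noncomputable def lamMax {n : Type*} [Fintype n] (A : Matrix n n ℝ) : ℝ :=
  sSup {x : ℝ | ∃ v : n → ℝ, (∑ i, v i ^ 2 = 1) ∧ x = v ⬝ᵥ A.mulVec v}

/-- `hatMatrix A = [[‖A‖·I, A], [Aᵀ, ‖A‖·I]]`. -/
noncomputable def hatMatrix {m n : ℕ} (A : Matrix (Fin m) (Fin n) ℝ) :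
    Matrix (Fin m ⊕ Fin n) (Fin m ⊕ Fin n) ℝ :=
  Matrix.fromBlocks (matrixSpectralNorm A • (1 : Matrix (Fin m) (Fin m) ℝ)) A
    Aᵀ (matrixSpectralNorm A • (1 : Matrix (Fin n) (Fin n) ℝ))

/-- The matrix composition `C = B̃ ∘ (Â_1 ⊗ ⋯ ⊗ Â_N)`. -/
noncomputable def matrixComposition {N : ℕ} {m n : Fin N → ℕ}
    (B : Matrix (Fin N → Bool) (Fin N → Bool) ℝ)
    (A : ∀ i, Matrix (Fin (m i)) (Fin (n i)) ℝ) :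
    Matrix (∀ i, Fin (m i) ⊕ Fin (n i)) (∀ i, Fin (m i) ⊕ Fin (n i)) ℝ :=
  Matrix.of fun a b =>
    B (fun i => (a i).isRight) (fun i => (b i).isRight) * ∏ i, hatMatrix (A i) (a i) (b i)

set_option linter.unusedSectionVars false
set_option linter.unusedVariables false
set_option maxHeartbeats 1000000

section helpers
variable {ι κ : Type*} [Fintype ι] [Fintype κ] [DecidableEq ι] [DecidableEq κ]

lemma enorm_sq (v : ι → ℝ) : ‖(WithLp.equiv 2 (ι → ℝ)).symm v‖ ^ 2 = ∑ i, v i ^ 2 := by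
  rw [EuclideanSpace.norm_eq, Real.sq_sqrt (by positivity)]
  simp [sq_abs]


lemma einner_eq (v w : ι → ℝ) :
    (inner ℝ ((WithLp.equiv 2 (ι → ℝ)).symm v) ((WithLp.equiv 2 (ι → ℝ)).symm w) : ℝ) = v ⬝ᵥ w := by
  simp [PiLp.inner_apply, dotProduct, mul_comm]


lemma eapply_eq (A : Matrix ι κ ℝ) (v : κ → ℝ) :
    (LinearMap.toContinuousLinearMap (Matrix.toEuclideanLin A)) ((WithLp.equiv 2 (κ → ℝ)).symm v)
      = (WithLp.equiv 2 (ι → ℝ)).symm (A *ᵥ v) := rfl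


lemma enorm_one_aux (v : ι → ℝ) (hv : ∑ i, v i ^ 2 = 1) :
    ‖(WithLp.equiv 2 (ι → ℝ)).symm v‖ = 1 := by
  have := enorm_sq v
  rw [hv] at this
  nlinarith [norm_nonneg ((WithLp.equiv 2 (ι → ℝ)).symm v)]


lemma abs_rayleigh_le (M : Matrix ι ι ℝ) (v : ι → ℝ) (hv : ∑ i, v i ^ 2 = 1) :
    |v ⬝ᵥ M.mulVec v| ≤ matrixSpectralNorm M := by
  set x := (WithLp.equiv 2 (ι → ℝ)).symm v with hx
  have h1 : v ⬝ᵥ M.mulVec v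
      = (inner ℝ x ((LinearMap.toContinuousLinearMap (Matrix.toEuclideanLin M)) x) : ℝ) := by
    rw [eapply_eq, einner_eq]
  rw [h1]
  calc |(inner ℝ x ((LinearMap.toContinuousLinearMap (Matrix.toEuclideanLin M)) x) : ℝ)|
      ≤ ‖x‖ * ‖(LinearMap.toContinuousLinearMap (Matrix.toEuclideanLin M)) x‖ :=
        abs_real_inner_le_norm _ _
    _ ≤ ‖x‖ * (matrixSpectralNorm M * ‖x‖) := by
        gcongr
        exact ContinuousLinearMap.le_opNorm _ _
    _ = matrixSpectralNorm M := by rw [enorm_one_aux v hv]; ring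


lemma bddAbove_rayleigh (M : Matrix ι ι ℝ) :
    BddAbove {x : ℝ | ∃ v : ι → ℝ, (∑ i, v i ^ 2 = 1) ∧ x = v ⬝ᵥ M.mulVec v} := by
  refine ⟨matrixSpectralNorm M, ?_⟩
  rintro x ⟨v, hv, rfl⟩
  exact (abs_le.1 (abs_rayleigh_le M v hv)).2


lemma lamMax_le_spectralNorm (M : Matrix ι ι ℝ) : lamMax M ≤ matrixSpectralNorm M := by
  apply Real.sSup_le
  · rintro x ⟨v, hv, rfl⟩
    exact (abs_le.1 (abs_rayleigh_le M v hv)).2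
  · exact norm_nonneg _


lemma exists_unit [Nonempty ι] : ∃ v : ι → ℝ, ∑ i, v i ^ 2 = 1 := by
  refine ⟨fun j => if j = Classical.arbitrary ι then 1 else 0, ?_⟩
  simp [ite_pow, Finset.sum_ite_eq']


lemma lamMax_achieved [Nonempty ι] (M : Matrix ι ι ℝ) :
    ∃ v : ι → ℝ, (∑ i, v i ^ 2 = 1) ∧ lamMax M = v ⬝ᵥ M.mulVec v := by
  have hne : (Metric.sphere (0 : EuclideanSpace ℝ ι) 1).Nonempty := by
    obtain ⟨v, hv⟩ := exists_unit (ι := ι)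
    exact ⟨(WithLp.equiv 2 (ι → ℝ)).symm v, by simpa using enorm_one_aux v hv⟩
  have hc : Continuous fun x : EuclideanSpace ℝ ι =>
      (inner ℝ x ((LinearMap.toContinuousLinearMap (Matrix.toEuclideanLin M)) x) : ℝ) := by
    exact Continuous.inner continuous_id (LinearMap.toContinuousLinearMap
      (Matrix.toEuclideanLin M)).continuous
  obtain ⟨x₀, hx₀, hmax⟩ := (isCompact_sphere (0 : EuclideanSpace ℝ ι) 1).exists_isMaxOn hne
    hc.continuousOn
  set v₀ : ι → ℝ := (WithLp.equiv 2 (ι → ℝ)) x₀ with hv₀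
  have hx₀v : (WithLp.equiv 2 (ι → ℝ)).symm v₀ = x₀ := by simp [hv₀]
  have hx₀n : ‖x₀‖ = 1 := by simpa using hx₀
  have hv₀u : ∑ i, v₀ i ^ 2 = 1 := by
    have := enorm_sq v₀; rw [hx₀v, hx₀n] at this; simpa using this.symm
  refine ⟨v₀, hv₀u, ?_⟩
  apply IsGreatest.csSup_eq
  constructor
  · refine ⟨v₀, hv₀u, rfl⟩
  · rintro y ⟨v, hv, rfl⟩
    have h1 : v ⬝ᵥ M.mulVec v = (inner ℝ ((WithLp.equiv 2 (ι → ℝ)).symm v)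
        ((LinearMap.toContinuousLinearMap (Matrix.toEuclideanLin M))
          ((WithLp.equiv 2 (ι → ℝ)).symm v)) : ℝ) := by rw [eapply_eq, einner_eq]
    have h2 : v₀ ⬝ᵥ M.mulVec v₀ = (inner ℝ x₀
        ((LinearMap.toContinuousLinearMap (Matrix.toEuclideanLin M)) x₀) : ℝ) := by
      rw [← hx₀v, eapply_eq, einner_eq]
    rw [h1, h2]
    exact hmax (by simpa using enorm_one_aux v hv)

lemma dot_sq_eq (v : ι → ℝ) : v ⬝ᵥ v = ∑ i, v i ^ 2 := by
  simp [dotProduct, sq]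


lemma rayleigh_scale (M : Matrix ι ι ℝ) (K : ℝ)
    (h : ∀ v : ι → ℝ, (∑ i, v i ^ 2 = 1) → |v ⬝ᵥ M.mulVec v| ≤ K)
    (hK : 0 ≤ K) (z : ι → ℝ) : |z ⬝ᵥ M.mulVec z| ≤ K * (z ⬝ᵥ z) := by
  rcases eq_or_ne z 0 with rfl | hz
  · simp
  · have ha : 0 < ∑ i, z i ^ 2 := by
      have : ∃ i, z i ≠ 0 := by
        by_contra hcon
        push_neg at hcon
        exact hz (funext hcon)
      obtain ⟨i, hi⟩ := this
      have : 0 < z i ^ 2 := by positivity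
      exact lt_of_lt_of_le this (Finset.single_le_sum (f := fun j => z j ^ 2)
        (fun j _ => by positivity) (Finset.mem_univ i))
    set r : ℝ := Real.sqrt (∑ i, z i ^ 2) with hr
    have hrpos : 0 < r := Real.sqrt_pos.mpr ha
    have hr2 : r ^ 2 = ∑ i, z i ^ 2 := Real.sq_sqrt ha.le
    set v : ι → ℝ := r⁻¹ • z with hv
    have hvu : ∑ i, v i ^ 2 = 1 := by
      simp only [hv, Pi.smul_apply, smul_eq_mul, mul_pow, ← Finset.mul_sum]
      rw [← hr2]
      field_simp
    have hval : v ⬝ᵥ M.mulVec v = r⁻¹ ^ 2 * (z ⬝ᵥ M.mulVec z) := by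
      rw [hv]
      rw [Matrix.mulVec_smul, dotProduct_smul, smul_dotProduct]
      simp [smul_eq_mul, sq]; ring
    have := h v hvu
    rw [hval, abs_mul, abs_of_nonneg (by positivity : (0:ℝ) ≤ r⁻¹ ^ 2)] at this
    have hzz : z ⬝ᵥ z = r ^ 2 := by rw [hr2, dot_sq_eq]
    rw [hzz]
    calc |z ⬝ᵥ M.mulVec z| = r ^ 2 * (r⁻¹ ^ 2 * |z ⬝ᵥ M.mulVec z|) := by
          field_simp
      _ ≤ r ^ 2 * K := by gcongr
      _ = K * r ^ 2 := by ring


lemma matrixSpectralNorm_le_max (M : Matrix ι ι ℝ) (hM : M.IsSymm) [Nonempty ι] :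
    matrixSpectralNorm M ≤ max (lamMax M) (lamMax (-M)) := by
  set K := max (lamMax M) (lamMax (-M)) with hKdef
  -- K ≥ 0
  have hK : 0 ≤ K := by
    obtain ⟨v, hv⟩ := exists_unit (ι := ι)
    have h1 : v ⬝ᵥ M.mulVec v ≤ lamMax M :=
      le_csSup (bddAbove_rayleigh M) ⟨v, hv, rfl⟩
    have h2 : v ⬝ᵥ (-M).mulVec v ≤ lamMax (-M) :=
      le_csSup (bddAbove_rayleigh (-M)) ⟨v, hv, rfl⟩
    have h3 : v ⬝ᵥ (-M).mulVec v = -(v ⬝ᵥ M.mulVec v) := by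
      simp [Matrix.neg_mulVec]
    rcases le_or_gt 0 (v ⬝ᵥ M.mulVec v) with h | h
    · exact le_trans (le_trans h h1) (le_max_left _ _)
    · rw [h3] at h2
      exact le_trans (le_trans (by linarith) h2) (le_max_right _ _)
  -- quadratic form bound over unit vectors
  have hunit : ∀ v : ι → ℝ, (∑ i, v i ^ 2 = 1) → |v ⬝ᵥ M.mulVec v| ≤ K := by
    intro v hv
    rw [abs_le]
    constructor
    · have h2 : v ⬝ᵥ (-M).mulVec v ≤ lamMax (-M) :=
        le_csSup (bddAbove_rayleigh (-M)) ⟨v, hv, rfl⟩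
      have h3 : v ⬝ᵥ (-M).mulVec v = -(v ⬝ᵥ M.mulVec v) := by simp [Matrix.neg_mulVec]
      rw [h3] at h2
      have := le_max_right (lamMax M) (lamMax (-M))
      linarith
    · exact le_trans (le_csSup (bddAbove_rayleigh M) ⟨v, hv, rfl⟩) (le_max_left _ _)
  have hquad : ∀ z : ι → ℝ, |z ⬝ᵥ M.mulVec z| ≤ K * (z ⬝ᵥ z) :=
    rayleigh_scale M K hunit hK
  -- symmetry of the bilinear form
  have hsym : ∀ a b : ι → ℝ, a ⬝ᵥ M.mulVec b = b ⬝ᵥ M.mulVec a := by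
    intro a b
    rw [Matrix.dotProduct_mulVec, ← Matrix.vecMul_transpose, hM.eq, dotProduct_comm]
  -- operator norm bound
  apply ContinuousLinearMap.opNorm_le_bound _ hK
  intro x
  set z : ι → ℝ := (WithLp.equiv 2 (ι → ℝ)) x with hz
  have hxz : (WithLp.equiv 2 (ι → ℝ)).symm z = x := by simp [hz]
  set y : ι → ℝ := M *ᵥ z with hy
  have hTx : (LinearMap.toContinuousLinearMap (Matrix.toEuclideanLin M)) x
      = (WithLp.equiv 2 (ι → ℝ)).symm y := by rw [← hxz, eapply_eq]
  have hny : ‖(LinearMap.toContinuousLinearMap (Matrix.toEuclideanLin M)) x‖ ^ 2 = y ⬝ᵥ y := by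
    rw [hTx, enorm_sq, dot_sq_eq]
  have hnx : ‖x‖ ^ 2 = z ⬝ᵥ z := by rw [← hxz, enorm_sq, dot_sq_eq]
  set a := z ⬝ᵥ z with hadef
  set b := y ⬝ᵥ y with hbdef
  have hb0 : 0 ≤ b := by rw [hbdef, dot_sq_eq]; positivity
  have ha0 : 0 ≤ a := by rw [hadef, dot_sq_eq]; positivity
  rcases eq_or_lt_of_le hb0 with hb | hb
  · -- y⬝y = 0  ⇒ ‖Tx‖ = 0
    have : ‖(LinearMap.toContinuousLinearMap (Matrix.toEuclideanLin M)) x‖ = 0 := by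
      nlinarith [norm_nonneg ((LinearMap.toContinuousLinearMap (Matrix.toEuclideanLin M)) x)]
    rw [this]; positivity
  · have haa : 0 < a := by
      rcases eq_or_lt_of_le ha0 with ha | ha
      · -- z ⬝ z = 0 ⇒ z = 0 ⇒ y = 0, contradiction
        exfalso
        have hz0 : z = 0 := by
          funext i
          have h1 : ∑ i, z i ^ 2 = 0 := by rw [← dot_sq_eq, ← hadef, ← ha]
          have := (Finset.sum_eq_zero_iff_of_nonneg
            (fun j _ => by positivity : ∀ j ∈ Finset.univ, (0:ℝ) ≤ z j ^ 2)).1 h1 i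
            (Finset.mem_univ i)
          exact pow_eq_zero_iff (n := 2) (by norm_num) |>.1 this
        have : y = 0 := by rw [hy, hz0, Matrix.mulVec_zero]
        rw [hbdef, this] at hb
        simp at hb
      · exact ha
    -- polarization
    set c : ℝ := Real.sqrt a / Real.sqrt b with hc
    have hsa : 0 < Real.sqrt a := Real.sqrt_pos.mpr haa
    have hsb : 0 < Real.sqrt b := Real.sqrt_pos.mpr hb
    have hcpos : 0 < c := div_pos hsa hsb
    have hsa2 : Real.sqrt a ^ 2 = a := Real.sq_sqrt ha0
    have hsb2 : Real.sqrt b ^ 2 = b := Real.sq_sqrt hb0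
    have hP1 : (z + c • y) ⬝ᵥ M.mulVec (z + c • y)
        = z ⬝ᵥ M.mulVec z + 2 * c * (y ⬝ᵥ M.mulVec z) + c ^ 2 * (y ⬝ᵥ M.mulVec y) := by
      rw [Matrix.mulVec_add, dotProduct_add, add_dotProduct, add_dotProduct,
        Matrix.mulVec_smul, dotProduct_smul, smul_dotProduct, dotProduct_smul,
        smul_dotProduct, hsym z y]
      simp [smul_eq_mul]; ring
    have hP2 : (z - c • y) ⬝ᵥ M.mulVec (z - c • y)
        = z ⬝ᵥ M.mulVec z - 2 * c * (y ⬝ᵥ M.mulVec z) + c ^ 2 * (y ⬝ᵥ M.mulVec y) := by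
      rw [Matrix.mulVec_sub, dotProduct_sub, sub_dotProduct, sub_dotProduct,
        Matrix.mulVec_smul, dotProduct_smul, smul_dotProduct, dotProduct_smul,
        smul_dotProduct, hsym z y]
      simp [smul_eq_mul]; ring
    have hyMz : y ⬝ᵥ M.mulVec z = b := by rw [hbdef, hy]
    have key : 4 * c * b ≤ K * (2 * a + 2 * c ^ 2 * b) := by
      have e1 := hquad (z + c • y)
      have e2 := hquad (z - c • y)
      have d1 : (z + c • y) ⬝ᵥ (z + c • y) = a + 2 * c * (z ⬝ᵥ y) + c ^ 2 * b := by
        rw [dotProduct_add, add_dotProduct, add_dotProduct, dotProduct_smul,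
          smul_dotProduct, dotProduct_smul, smul_dotProduct, dotProduct_comm y z]
        simp [smul_eq_mul]; ring
      have d2 : (z - c • y) ⬝ᵥ (z - c • y) = a - 2 * c * (z ⬝ᵥ y) + c ^ 2 * b := by
        rw [dotProduct_sub, sub_dotProduct, sub_dotProduct, dotProduct_smul,
          smul_dotProduct, dotProduct_smul, smul_dotProduct, dotProduct_comm y z]
        simp [smul_eq_mul]; ring
      have l1 : (z + c • y) ⬝ᵥ M.mulVec (z + c • y) ≤ K * ((z + c • y) ⬝ᵥ (z + c • y)) :=
        (abs_le.1 e1).2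
      have l2 : -((z - c • y) ⬝ᵥ M.mulVec (z - c • y)) ≤ K * ((z - c • y) ⬝ᵥ (z - c • y)) := by
        have := (abs_le.1 e2).1; linarith
      rw [hP1, d1] at l1
      rw [hP2, d2] at l2
      rw [hyMz] at l1 l2
      nlinarith [l1, l2]
    -- from 4cb ≤ K(2a + 2c²b) with c = √a/√b conclude √b ≤ K √a
    have hc2b : c ^ 2 * b = a := by
      rw [hc, div_pow, hsa2, hsb2]; field_simp
    have key2 : 4 * c * b ≤ 4 * K * a := by
      nlinarith [key, hc2b]
    have key3 : Real.sqrt a * Real.sqrt b ≤ K * a := by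
      have hcb : c * b = Real.sqrt a * Real.sqrt b := by
        rw [hc]
        field_simp
        nlinarith [hsb2]
      nlinarith [key2, hcb]
    have key4 : Real.sqrt b ≤ K * Real.sqrt a := by
      nlinarith [key3, hsa, hsa2]
    have hTxn : ‖(LinearMap.toContinuousLinearMap (Matrix.toEuclideanLin M)) x‖
        = Real.sqrt b := by
      rw [← Real.sqrt_sq (norm_nonneg _), hny]
    have hxn : ‖x‖ = Real.sqrt a := by rw [← Real.sqrt_sq (norm_nonneg x), hnx]
    rw [hTxn, hxn]
    exact key4
lemma matrixSpectralNorm_eq_zero_left [IsEmpty ι] (A : Matrix ι κ ℝ) : matrixSpectralNorm A = 0 := by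
  have h : ∀ x : EuclideanSpace ℝ κ,
      ‖(LinearMap.toContinuousLinearMap (Matrix.toEuclideanLin A)) x‖ = 0 := by
    intro x
    have : (LinearMap.toContinuousLinearMap (Matrix.toEuclideanLin A)) x = 0 :=
      Subsingleton.elim _ _
    rw [this, norm_zero]
  refine le_antisymm ?_ (norm_nonneg _)
  apply ContinuousLinearMap.opNorm_le_bound _ le_rfl
  intro x; rw [h x]; positivity


lemma matrixSpectralNorm_eq_zero_right [IsEmpty κ] (A : Matrix ι κ ℝ) : matrixSpectralNorm A = 0 := by
  refine le_antisymm ?_ (norm_nonneg _)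
  apply ContinuousLinearMap.opNorm_le_bound _ le_rfl
  intro x
  have : x = 0 := Subsingleton.elim _ _
  rw [this]; simp


lemma exists_singvecs [Nonempty ι] [Nonempty κ] (A : Matrix ι κ ℝ) :
    ∃ (u : ι → ℝ) (v : κ → ℝ), (∑ i, u i ^ 2 = 1) ∧ (∑ j, v j ^ 2 = 1) ∧
      u ⬝ᵥ A.mulVec v = matrixSpectralNorm A := by
  set T := LinearMap.toContinuousLinearMap (Matrix.toEuclideanLin A) with hT
  have hne : (Metric.sphere (0 : EuclideanSpace ℝ κ) 1).Nonempty := by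
    obtain ⟨v, hv⟩ := exists_unit (ι := κ)
    exact ⟨(WithLp.equiv 2 (κ → ℝ)).symm v, by simpa using enorm_one_aux v hv⟩
  obtain ⟨x₀, hx₀, hmax⟩ := (isCompact_sphere (0 : EuclideanSpace ℝ κ) 1).exists_isMaxOn hne
    (T.continuous.norm.continuousOn)
  have hx₀n : ‖x₀‖ = 1 := by simpa using hx₀
  set v : κ → ℝ := (WithLp.equiv 2 (κ → ℝ)) x₀ with hv
  have hx₀v : (WithLp.equiv 2 (κ → ℝ)).symm v = x₀ := by simp [hv]
  have hvu : ∑ j, v j ^ 2 = 1 := by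
    have := enorm_sq v; rw [hx₀v, hx₀n] at this; simpa using this.symm
  -- matrixSpectralNorm A = ‖T x₀‖
  have hnorm : matrixSpectralNorm A = ‖T x₀‖ := by
    refine le_antisymm ?_ ?_
    · apply ContinuousLinearMap.opNorm_le_bound _ (norm_nonneg _)
      intro x
      rcases eq_or_ne x 0 with rfl | hx
      · simp
      · have hxn : 0 < ‖x‖ := norm_pos_iff.mpr hx
        have hmem : (‖x‖⁻¹ • x) ∈ Metric.sphere (0 : EuclideanSpace ℝ κ) 1 := by
          simp [norm_smul, abs_of_pos (inv_pos.mpr hxn), inv_mul_cancel₀ hxn.ne']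
        have := hmax hmem
        simp only [_root_.map_smul, norm_smul, norm_inv, norm_norm, Set.mem_setOf_eq] at this
        have h2 : ‖x‖⁻¹ * ‖T x‖ ≤ ‖T x₀‖ := by simpa using this
        calc ‖T x‖ = ‖x‖ * (‖x‖⁻¹ * ‖T x‖) := by field_simp
          _ ≤ ‖x‖ * ‖T x₀‖ := mul_le_mul_of_nonneg_left h2 hxn.le
          _ = ‖T x₀‖ * ‖x‖ := by ring
    · calc ‖T x₀‖ ≤ ‖T‖ * ‖x₀‖ := T.le_opNorm x₀
        _ = matrixSpectralNorm A := by rw [hx₀n, hT, matrixSpectralNorm]; ring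
  set b : ι → ℝ := A *ᵥ v with hb
  have hTx₀ : T x₀ = (WithLp.equiv 2 (ι → ℝ)).symm b := by rw [← hx₀v, hT, eapply_eq]
  have hbn : ‖T x₀‖ ^ 2 = ∑ i, b i ^ 2 := by rw [hTx₀, enorm_sq]
  rcases eq_or_ne (‖T x₀‖) 0 with h0 | h0
  · -- norm is 0, pick any unit u
    obtain ⟨u, hu⟩ := exists_unit (ι := ι)
    refine ⟨u, v, hu, hvu, ?_⟩
    have hb0 : b = 0 := by
      have h1 : ∑ i, b i ^ 2 = 0 := by rw [← hbn, h0]; ring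
      funext i
      have := (Finset.sum_eq_zero_iff_of_nonneg
        (fun j _ => by positivity : ∀ j ∈ Finset.univ, (0:ℝ) ≤ b j ^ 2)).1 h1 i
        (Finset.mem_univ i)
      exact pow_eq_zero_iff (n := 2) (by norm_num) |>.1 this
    rw [← hb, hb0, dotProduct_zero, hnorm, h0]
  · have hbpos : 0 < ‖T x₀‖ := lt_of_le_of_ne (norm_nonneg _) (Ne.symm h0)
    refine ⟨(‖T x₀‖⁻¹) • b, v, ?_, hvu, ?_⟩
    · simp only [Pi.smul_apply, smul_eq_mul, mul_pow, ← Finset.mul_sum, ← hbn]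
      field_simp
    · rw [← hb, smul_dotProduct]
      have : b ⬝ᵥ b = ‖T x₀‖ ^ 2 := by
        rw [hbn]; simp [dotProduct, sq]
      rw [smul_eq_mul, this, hnorm, sq]
      field_simp

lemma matrixSpectralNorm_neg (M : Matrix ι κ ℝ) : matrixSpectralNorm (-M) = matrixSpectralNorm M := by
  unfold matrixSpectralNorm
  rw [map_neg, map_neg, norm_neg]

end helpers

lemma matrixSpectralNorm_zero_of_deg {m n : ℕ} (A : Matrix (Fin m) (Fin n) ℝ)
    (h : m = 0 ∨ n = 0) : matrixSpectralNorm A = 0 := by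
  rcases h with h | h
  · subst h; exact matrixSpectralNorm_eq_zero_left A
  · subst h; exact matrixSpectralNorm_eq_zero_right A



lemma sum_fiber {N : ℕ} {κ : Fin N → Type*} [∀ i, Fintype (κ i)]
    (p : ∀ i, κ i → Bool) (G : (Fin N → Bool) → ℝ) (h : ∀ i, κ i → ℝ) :
    ∑ a : ∀ i, κ i, G (fun i => p i (a i)) * ∏ i, h i (a i)
      = ∑ s : Fin N → Bool, G s * ∏ i, ∑ x : κ i, (if p i x = s i then h i x else 0) := by
  have step1 : ∀ s : Fin N → Bool, ∏ i, ∑ x : κ i, (if p i x = s i then h i x else 0)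
      = ∑ a : ∀ i, κ i, ∏ i, (if p i (a i) = s i then h i (a i) else 0) := by
    intro s
    rw [Finset.prod_univ_sum]
    simp
  simp only [step1, Finset.mul_sum]
  rw [Finset.sum_comm]
  congr 1
  funext a
  have step2 : ∀ s : Fin N → Bool, ∏ i, (if p i (a i) = s i then h i (a i) else 0)
      = if s = (fun i => p i (a i)) then ∏ i, h i (a i) else 0 := by
    intro s
    by_cases hs : s = fun i => p i (a i)
    · subst hs; simp
    · rw [if_neg hs]
      have : ∃ i, p i (a i) ≠ s i := by
        by_contra hcon
        push_neg at hcon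
        exact hs (funext fun i => (hcon i).symm)
      obtain ⟨i, hi⟩ := this
      exact Finset.prod_eq_zero (Finset.mem_univ i) (if_neg hi)
  simp only [step2, mul_ite, mul_zero]
  simp

lemma fiber_left {m n : ℕ} (h : Fin m ⊕ Fin n → ℝ) :
    ∑ x : Fin m ⊕ Fin n, (if x.isRight = false then h x else 0)
      = ∑ j : Fin m, h (Sum.inl j) := by
  rw [Fintype.sum_sum_type]
  simp

lemma fiber_right {m n : ℕ} (h : Fin m ⊕ Fin n → ℝ) :
    ∑ x : Fin m ⊕ Fin n, (if x.isRight = true then h x else 0)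
      = ∑ j : Fin n, h (Sum.inr j) := by
  rw [Fintype.sum_sum_type]
  simp

lemma key_ineq {N : ℕ} {m n : Fin N → ℕ}
    (B : Matrix (Fin N → Bool) (Fin N → Bool) ℝ)
    (A : ∀ i, Matrix (Fin (m i)) (Fin (n i)) ℝ)
    (hpos : ∀ i, 0 < m i ∧ 0 < n i) :
    lamMax B * ∏ i, matrixSpectralNorm (A i) ≤ lamMax (matrixComposition B A) := by
  haveI : ∀ i, Nonempty (Fin (m i)) := fun i => Fin.pos_iff_nonempty.mp (hpos i).1
  haveI : ∀ i, Nonempty (Fin (n i)) := fun i => Fin.pos_iff_nonempty.mp (hpos i).2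
  have hsing : ∀ i, ∃ (u : Fin (m i) → ℝ) (v : Fin (n i) → ℝ),
      (∑ j, u j ^ 2 = 1) ∧ (∑ j, v j ^ 2 = 1) ∧
      u ⬝ᵥ (A i).mulVec v = matrixSpectralNorm (A i) := fun i => exists_singvecs (A i)
  choose u v hu hv huv using hsing
  obtain ⟨w, hw, hlam⟩ := lamMax_achieved B
  set c : Fin N → ℝ := fun i => matrixSpectralNorm (A i) with hc
  set ζ : ∀ i, Fin (m i) ⊕ Fin (n i) → ℝ := fun i => Sum.elim (u i) (v i) with hζ
  set x : (∀ i, Fin (m i) ⊕ Fin (n i)) → ℝ :=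
    fun a => w (fun i => (a i).isRight) * ∏ i, ζ i (a i) with hx
  -- ζ fiber sums of squares are 1
  have hζsq : ∀ i (sb : Bool), ∑ y, (if (Sum.isRight y) = sb then ζ i y ^ 2 else 0) = 1 := by
    intro i sb
    cases sb
    · rw [fiber_left]; simpa [hζ] using hu i
    · rw [fiber_right]; simpa [hζ] using hv i
  -- Claim 1 : x is a unit vector
  have claim1 : ∑ a, x a ^ 2 = 1 := by
    have : ∀ a, x a ^ 2 = (fun s => w s ^ 2) (fun i => (a i).isRight)
        * ∏ i, ζ i (a i) ^ 2 := by
      intro a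
      simp only [hx, mul_pow, Finset.prod_pow]
    simp only [this]
    rw [sum_fiber (fun i y => Sum.isRight y) (fun s => w s ^ 2) (fun i y => ζ i y ^ 2)]
    simp only [hζsq]
    simpa using hw
  -- R : the half-contracted sums
  set R : ∀ i, (Fin (m i) ⊕ Fin (n i)) → Bool → ℝ :=
    fun i y tb => ∑ z, (if (Sum.isRight z) = tb then hatMatrix (A i) y z * ζ i z else 0)
    with hR
  -- Q : fully contracted sums all equal the spectral norm
  have hQ : ∀ i (sb tb : Bool),
      (∑ y, (if (Sum.isRight y) = sb then ζ i y * R i y tb else 0)) = c i := by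
    intro i sb tb
    have hRl : ∀ j : Fin (m i), R i (Sum.inl j) false = c i * u i j := by
      intro j
      simp only [hR]
      rw [fiber_left]
      simp only [hatMatrix, Matrix.fromBlocks_apply₁₁, hζ, Sum.elim_inl]
      simp [Matrix.smul_apply, Matrix.one_apply, mul_ite, Finset.sum_ite_eq, hc]
    have hRlr : ∀ j : Fin (m i), R i (Sum.inl j) true = (A i).mulVec (v i) j := by
      intro j
      simp only [hR]
      rw [fiber_right]
      simp [hatMatrix, Matrix.fromBlocks_apply₁₂, hζ, Matrix.mulVec, dotProduct]
    have hRr : ∀ k : Fin (n i), R i (Sum.inr k) true = c i * v i k := by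
      intro k
      simp only [hR]
      rw [fiber_right]
      simp only [hatMatrix, Matrix.fromBlocks_apply₂₂, hζ, Sum.elim_inr]
      simp [Matrix.smul_apply, Matrix.one_apply, mul_ite, Finset.sum_ite_eq, hc]
    have hRrl : ∀ k : Fin (n i), R i (Sum.inr k) false = ∑ j, A i j k * u i j := by
      intro k
      simp only [hR]
      rw [fiber_left]
      simp [hatMatrix, Matrix.fromBlocks_apply₂₁, hζ, Matrix.transpose_apply]
    cases sb
    · rw [fiber_left]
      cases tb
      · simp only [hRl, hζ, Sum.elim_inl]
        calc ∑ j, u i j * (c i * u i j) = c i * ∑ j, u i j ^ 2 := by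
              rw [Finset.mul_sum]
              exact Finset.sum_congr rfl fun j _ => by ring
          _ = c i := by rw [hu i, mul_one]
      · simp only [hRlr, hζ, Sum.elim_inl]
        calc ∑ j, u i j * (A i).mulVec (v i) j = u i ⬝ᵥ (A i).mulVec (v i) := rfl
          _ = c i := huv i
    · rw [fiber_right]
      cases tb
      · simp only [hRrl, hζ, Sum.elim_inr]
        calc ∑ k, v i k * ∑ j, A i j k * u i j
            = ∑ k, ∑ j, u i j * (A i j k * v i k) := by
              refine Finset.sum_congr rfl fun k _ => ?_
              rw [Finset.mul_sum]
              exact Finset.sum_congr rfl fun j _ => by ring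
          _ = ∑ j, ∑ k, u i j * (A i j k * v i k) := Finset.sum_comm
          _ = u i ⬝ᵥ (A i).mulVec (v i) := by
              simp [dotProduct, Matrix.mulVec, Finset.mul_sum]
          _ = c i := huv i
      · simp only [hRr, hζ, Sum.elim_inr]
        calc ∑ k, v i k * (c i * v i k) = c i * ∑ k, v i k ^ 2 := by
              rw [Finset.mul_sum]
              exact Finset.sum_congr rfl fun k _ => by ring
          _ = c i := by rw [hv i, mul_one]
  -- expansion of the matrix-vector product along patterns
  have inner_eq : ∀ a, (matrixComposition B A).mulVec x a
      = ∑ t : Fin N → Bool, B (fun i => (a i).isRight) t * w t * ∏ i, R i (a i) (t i) := by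
    intro a
    have hs := sum_fiber (κ := fun i => Fin (m i) ⊕ Fin (n i)) (fun i y => Sum.isRight y)
      (fun t => B (fun i => (a i).isRight) t * w t)
      (fun i y => hatMatrix (A i) (a i) y * ζ i y)
    calc (matrixComposition B A).mulVec x a
        = ∑ b : ∀ i, Fin (m i) ⊕ Fin (n i),
            (B (fun i => (a i).isRight) (fun i => (b i).isRight) * w (fun i => (b i).isRight))
              * ∏ i, (hatMatrix (A i) (a i) (b i) * ζ i (b i)) := by
          simp only [Matrix.mulVec, dotProduct, matrixComposition, Matrix.of_apply, hx]
          refine Finset.sum_congr rfl fun b _ => ?_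
          rw [Finset.prod_mul_distrib]
          ring
      _ = ∑ t : Fin N → Bool, B (fun i => (a i).isRight) t * w t
            * ∏ i, R i (a i) (t i) := hs
  -- Claim 2 : the Rayleigh quotient of x
  have claim2 : x ⬝ᵥ (matrixComposition B A).mulVec x
      = (∏ i, c i) * (w ⬝ᵥ B.mulVec w) := by
    calc x ⬝ᵥ (matrixComposition B A).mulVec x
        = ∑ t : Fin N → Bool, ∑ a : ∀ i, Fin (m i) ⊕ Fin (n i),
            (w (fun i => (a i).isRight) * B (fun i => (a i).isRight) t * w t)
              * ∏ i, (ζ i (a i) * R i (a i) (t i)) := by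
          simp only [dotProduct, inner_eq]
          simp only [hx, Finset.mul_sum]
          rw [Finset.sum_comm]
          refine Finset.sum_congr rfl fun t _ => ?_
          refine Finset.sum_congr rfl fun a _ => ?_
          rw [Finset.prod_mul_distrib]
          ring
      _ = ∑ t : Fin N → Bool, ∑ s : Fin N → Bool, (w s * B s t * w t) * ∏ i, c i := by
          refine Finset.sum_congr rfl fun t _ => ?_
          have hs := sum_fiber (κ := fun i => Fin (m i) ⊕ Fin (n i)) (fun i y => Sum.isRight y)
            (fun s => w s * B s t * w t) (fun i y => ζ i y * R i y (t i))
          calc ∑ a : ∀ i, Fin (m i) ⊕ Fin (n i),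
              (w (fun i => (a i).isRight) * B (fun i => (a i).isRight) t * w t)
                * ∏ i, (ζ i (a i) * R i (a i) (t i))
              = ∑ s : Fin N → Bool, (w s * B s t * w t)
                  * ∏ i, ∑ y, (if (Sum.isRight y) = s i then ζ i y * R i y (t i) else 0) := hs
            _ = ∑ s : Fin N → Bool, (w s * B s t * w t) * ∏ i, c i := by
                refine Finset.sum_congr rfl fun s _ => ?_
                congr 1
                exact Finset.prod_congr rfl fun i _ => hQ i (s i) (t i)
      _ = (∏ i, c i) * (w ⬝ᵥ B.mulVec w) := by
          simp only [dotProduct, Matrix.mulVec, Finset.mul_sum]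
          rw [Finset.sum_comm]
          refine Finset.sum_congr rfl fun s _ => ?_
          refine Finset.sum_congr rfl fun t _ => ?_
          ring
  -- conclude
  have hmem : (∏ i, c i) * (w ⬝ᵥ B.mulVec w) ∈
      {y : ℝ | ∃ z, (∑ a, z a ^ 2 = 1) ∧ y = z ⬝ᵥ (matrixComposition B A).mulVec z} :=
    ⟨x, claim1, claim2.symm⟩
  have hle : (∏ i, c i) * (w ⬝ᵥ B.mulVec w) ≤ lamMax (matrixComposition B A) :=
    le_csSup (bddAbove_rayleigh (matrixComposition B A)) hmem
  calc lamMax B * ∏ i, matrixSpectralNorm (A i) = (∏ i, c i) * (w ⬝ᵥ B.mulVec w) := by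
        rw [hlam, hc]; ring
    _ ≤ lamMax (matrixComposition B A) := hle

lemma hatMatrix_diag {m n : ℕ} (A : Matrix (Fin m) (Fin n) ℝ) (y : Fin m ⊕ Fin n) :
    hatMatrix A y y = matrixSpectralNorm A := by
  cases y with
  | inl j => simp [hatMatrix, Matrix.one_apply]
  | inr k => simp [hatMatrix, Matrix.one_apply]

lemma lamMax_nonneg_deg {N : ℕ} {m n : Fin N → ℕ}
    (B : Matrix (Fin N → Bool) (Fin N → Bool) ℝ)
    (A : ∀ i, Matrix (Fin (m i)) (Fin (n i)) ℝ)
    (hP : ∏ i, matrixSpectralNorm (A i) = 0) :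
    0 ≤ lamMax (matrixComposition B A) := by
  rcases isEmpty_or_nonempty (∀ i, Fin (m i) ⊕ Fin (n i)) with hE | hNE
  · have hset : {x : ℝ | ∃ v : (∀ i, Fin (m i) ⊕ Fin (n i)) → ℝ,
        (∑ a, v a ^ 2 = 1) ∧ x = v ⬝ᵥ (matrixComposition B A).mulVec v} = ∅ := by
      rw [Set.eq_empty_iff_forall_notMem]
      rintro y ⟨v, hv, _⟩
      rw [Finset.univ_eq_empty, Finset.sum_empty] at hv
      norm_num at hv
    rw [lamMax, hset, Real.sSup_empty]
  · obtain ⟨a₀⟩ := hNE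
    set e : (∀ i, Fin (m i) ⊕ Fin (n i)) → ℝ := fun a => if a = a₀ then 1 else 0 with he
    have hunit : ∑ a, e a ^ 2 = 1 := by
      simp [he, ite_pow, Finset.sum_ite_eq']
    have hval : e ⬝ᵥ (matrixComposition B A).mulVec e = 0 := by
      have : e ⬝ᵥ (matrixComposition B A).mulVec e = matrixComposition B A a₀ a₀ := by
        simp [he, dotProduct, Matrix.mulVec, mul_ite, ite_mul, Finset.sum_ite_eq']
      rw [this]
      have : matrixComposition B A a₀ a₀
          = B (fun i => (a₀ i).isRight) (fun i => (a₀ i).isRight) * ∏ i, matrixSpectralNorm (A i) := by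
        simp only [matrixComposition, Matrix.of_apply]
        congr 1
        exact Finset.prod_congr rfl fun i _ => hatMatrix_diag (A i) (a₀ i)
      rw [this, hP, mul_zero]
    have hmem : (0 : ℝ) ∈ {x : ℝ | ∃ v : (∀ i, Fin (m i) ⊕ Fin (n i)) → ℝ,
        (∑ a, v a ^ 2 = 1) ∧ x = v ⬝ᵥ (matrixComposition B A).mulVec v} :=
      ⟨e, hunit, hval.symm⟩
    exact le_csSup (bddAbove_rayleigh (matrixComposition B A)) hmem

/-- For the matrix composition `C` of a symmetric matrix `B` with `A_1, …, A_N`: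
`λ_max(C) ≥ λ_max(B) · ∏ i ‖A_i‖` and `‖C‖ ≥ ‖B‖ · ∏ i ‖A_i‖`. -/
theorem stmt8 {N : ℕ} {m n : Fin N → ℕ}
    (B : Matrix (Fin N → Bool) (Fin N → Bool) ℝ) (hB : B.IsSymm)
    (A : ∀ i, Matrix (Fin (m i)) (Fin (n i)) ℝ) :
    lamMax (matrixComposition B A) ≥ lamMax B * ∏ i, matrixSpectralNorm (A i) ∧
    matrixSpectralNorm (matrixComposition B A) ≥ matrixSpectralNorm B * ∏ i, matrixSpectralNorm (A i) := by
  have hP : 0 ≤ ∏ i, matrixSpectralNorm (A i) :=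
    Finset.prod_nonneg fun i _ => norm_nonneg _
  by_cases hpos : ∀ i, 0 < m i ∧ 0 < n i
  · -- nondegenerate case
    have h1 : lamMax B * ∏ i, matrixSpectralNorm (A i) ≤ lamMax (matrixComposition B A) :=
      key_ineq B A hpos
    have hneg : matrixComposition (-B) A = -(matrixComposition B A) := by
      ext a b
      simp [matrixComposition, neg_mul]
    have h2 : lamMax (-B) * ∏ i, matrixSpectralNorm (A i) ≤ lamMax (-(matrixComposition B A)) := by
      have := key_ineq (-B) A hpos
      rwa [hneg] at this
    refine ⟨h1, ?_⟩
    have h3 : lamMax (matrixComposition B A) ≤ matrixSpectralNorm (matrixComposition B A) :=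
      lamMax_le_spectralNorm _
    have h4 : lamMax (-(matrixComposition B A)) ≤ matrixSpectralNorm (matrixComposition B A) := by
      have := lamMax_le_spectralNorm (-(matrixComposition B A))
      rwa [matrixSpectralNorm_neg] at this
    have hBmax : matrixSpectralNorm B ≤ max (lamMax B) (lamMax (-B)) :=
      matrixSpectralNorm_le_max B hB
    calc matrixSpectralNorm B * ∏ i, matrixSpectralNorm (A i)
        ≤ max (lamMax B) (lamMax (-B)) * ∏ i, matrixSpectralNorm (A i) :=
          mul_le_mul_of_nonneg_right hBmax hP
      _ = max (lamMax B * ∏ i, matrixSpectralNorm (A i)) (lamMax (-B) * ∏ i, matrixSpectralNorm (A i)) :=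
          max_mul_of_nonneg _ _ hP
      _ ≤ matrixSpectralNorm (matrixComposition B A) := max_le (h1.trans h3) (h2.trans h4)
  · -- degenerate case : some A i has a zero dimension, so the RHS is zero
    push_neg at hpos
    obtain ⟨i₀, hi₀⟩ := hpos
    have hz : matrixSpectralNorm (A i₀) = 0 := by
      apply matrixSpectralNorm_zero_of_deg
      rcases Nat.eq_zero_or_pos (m i₀) with h | h
      · exact Or.inl h
      · exact Or.inr (by have := hi₀ h; omega)
    have hP0 : ∏ i, matrixSpectralNorm (A i) = 0 :=
      Finset.prod_eq_zero (Finset.mem_univ i₀) hz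
    rw [hP0, mul_zero, mul_zero]
    exact ⟨lamMax_nonneg_deg B A hP0, norm_nonneg _⟩
end

section
/- With the composition setup, ‖C‖ = ‖B‖ · ∏_{i=1}^N ‖A_i‖ exactly, where C is the matrix composition of the symmetric matrix B with A_1,…,A_N. -/
open Matrix

set_option linter.unusedSectionVars false
set_option linter.unusedVariables false
set_option linter.unusedTactic false
set_option maxHeartbeats 1000000

namespace SpecAux

lemma norm_symm_sq {n : Type*} [Fintype n] (x : n → ℝ) : ‖(WithLp.equiv 2 (n → ℝ)).symm x‖ ^ 2 = x ⬝ᵥ x := by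
  rw [EuclideanSpace.norm_eq, Real.sq_sqrt (by positivity)]
  simp [dotProduct, sq, Real.norm_eq_abs, abs_mul_abs_self]

lemma dot_self_nonneg {n : Type*} [Fintype n] (x : n → ℝ) : 0 ≤ x ⬝ᵥ x :=
  Finset.sum_nonneg fun i _ => mul_self_nonneg _

lemma dot_sq_le {n : Type*} [Fintype n] (x y : n → ℝ) :
    (x ⬝ᵥ y) ^ 2 ≤ (x ⬝ᵥ x) * (y ⬝ᵥ y) := by
  have cs : (∑ i, x i * y i) ^ 2 ≤ (∑ i, (x i) ^ 2) * (∑ i, (y i) ^ 2) :=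
    Finset.sum_mul_sq_le_sq_mul_sq Finset.univ x y
  simpa [dotProduct, sq] using cs

variable {m n : Type*} [Fintype m] [Fintype n] [DecidableEq n]

lemma spec_nonneg (M : Matrix m n ℝ) : 0 ≤ matrixSpectralNorm M := norm_nonneg _

lemma mulVec_dot_le (M : Matrix m n ℝ) (x : n → ℝ) :
    (M *ᵥ x) ⬝ᵥ (M *ᵥ x) ≤ matrixSpectralNorm M ^ 2 * (x ⬝ᵥ x) := by
  have h : ‖(WithLp.equiv 2 (m → ℝ)).symm (M *ᵥ x)‖ ≤
      matrixSpectralNorm M * ‖(WithLp.equiv 2 (n → ℝ)).symm x‖ :=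
    (LinearMap.toContinuousLinearMap (Matrix.toEuclideanLin M)).le_opNorm
      ((WithLp.equiv 2 (n → ℝ)).symm x)
  have h3 := norm_symm_sq (n := m) (M *ᵥ x)
  have hx := norm_symm_sq (n := n) x
  nlinarith [norm_nonneg ((WithLp.equiv 2 (m → ℝ)).symm (M *ᵥ x)),
    norm_nonneg ((WithLp.equiv 2 (n → ℝ)).symm x), spec_nonneg M]

lemma spec_le (M : Matrix m n ℝ) {c : ℝ} (hc : 0 ≤ c)
    (h : ∀ x : n → ℝ, (M *ᵥ x) ⬝ᵥ (M *ᵥ x) ≤ c ^ 2 * (x ⬝ᵥ x)) : matrixSpectralNorm M ≤ c := by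
  apply ContinuousLinearMap.opNorm_le_bound _ hc
  intro v
  have h2 : (LinearMap.toContinuousLinearMap (Matrix.toEuclideanLin M)) v
      = (WithLp.equiv 2 (m → ℝ)).symm (M *ᵥ (WithLp.equiv 2 (n → ℝ)) v) := rfl
  rw [h2]
  have key := h ((WithLp.equiv 2 (n → ℝ)) v)
  have h3 := norm_symm_sq (n := m) (M *ᵥ (WithLp.equiv 2 (n → ℝ)) v)
  have h4 : ‖v‖ ^ 2 = (WithLp.equiv 2 (n → ℝ)) v ⬝ᵥ (WithLp.equiv 2 (n → ℝ)) v := by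
    have := norm_symm_sq (n := n) ((WithLp.equiv 2 (n → ℝ)) v)
    simpa using this
  nlinarith [norm_nonneg ((WithLp.equiv 2 (m → ℝ)).symm (M *ᵥ (WithLp.equiv 2 (n → ℝ)) v)),
    norm_nonneg v, mul_nonneg hc (norm_nonneg v)]

lemma le_spec (M : Matrix m n ℝ) (x : n → ℝ) (y : m → ℝ) (hx : x ⬝ᵥ x = 1) (hy : y ⬝ᵥ y = 1) :
    y ⬝ᵥ (M *ᵥ x) ≤ matrixSpectralNorm M := by
  have cs : (∑ i, y i * (M *ᵥ x) i) ^ 2 ≤ (∑ i, (y i) ^ 2) * (∑ i, ((M *ᵥ x) i) ^ 2) :=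
    Finset.sum_mul_sq_le_sq_mul_sq Finset.univ y (M *ᵥ x)
  have hb := mulVec_dot_le M x
  rw [hx, mul_one] at hb
  have e1 : y ⬝ᵥ (M *ᵥ x) = ∑ i, y i * (M *ᵥ x) i := rfl
  have e2 : (∑ i, (y i) ^ 2) = y ⬝ᵥ y := by simp [dotProduct, sq]
  have e3 : (∑ i, ((M *ᵥ x) i) ^ 2) = (M *ᵥ x) ⬝ᵥ (M *ᵥ x) := by simp [dotProduct, sq]
  rw [e2, e3, hy, one_mul] at cs
  nlinarith [spec_nonneg M]


lemma transpose_dot_le (M : Matrix m n ℝ) (x : m → ℝ) :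
    (Mᵀ *ᵥ x) ⬝ᵥ (Mᵀ *ᵥ x) ≤ matrixSpectralNorm M ^ 2 * (x ⬝ᵥ x) := by
  set y := Mᵀ *ᵥ x with hy
  have h1 : y ⬝ᵥ y = x ⬝ᵥ (M *ᵥ y) := by
    rw [hy, mulVec_transpose, dotProduct_mulVec]
  have h2 := dot_sq_le x (M *ᵥ y)
  have h3 := mulVec_dot_le M y
  have h4 := dot_self_nonneg y
  have h5 := dot_self_nonneg x
  have h6 := spec_nonneg M
  have h7 : (y ⬝ᵥ y) ^ 2 ≤ (matrixSpectralNorm M ^ 2 * (x ⬝ᵥ x)) * (y ⬝ᵥ y) := by nlinarith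
  by_cases h0 : y ⬝ᵥ y = 0
  · rw [h0]; exact mul_nonneg (sq_nonneg _) h5
  · have hpos : 0 < y ⬝ᵥ y := lt_of_le_of_ne h4 (Ne.symm h0)
    nlinarith [h7, hpos]

lemma exists_singular (M : Matrix m n ℝ) (hM : 0 < matrixSpectralNorm M) :
    ∃ (u : m → ℝ) (v : n → ℝ), u ⬝ᵥ u = 1 ∧ v ⬝ᵥ v = 1 ∧
      M *ᵥ v = matrixSpectralNorm M • u ∧ Mᵀ *ᵥ u = matrixSpectralNorm M • v := by
  set s := matrixSpectralNorm M with hs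
  set T := LinearMap.toContinuousLinearMap (Matrix.toEuclideanLin M) with hT
  -- n is nonempty
  have hne : Nonempty n := by
    by_contra h
    have hempty : IsEmpty n := not_nonempty_iff.mp h
    have : s ≤ 0 := by
      apply spec_le M le_rfl
      intro x
      have : M *ᵥ x = 0 := by
        funext i; simp [mulVec, dotProduct, Finset.sum_of_isEmpty]
      simp [this, dot_self_nonneg x]
    linarith
  -- norm attained on sphere
  have hcs : IsCompact (Metric.sphere (0 : EuclideanSpace ℝ n) 1) := isCompact_sphere _ _
  have hnes : (Metric.sphere (0 : EuclideanSpace ℝ n) 1).Nonempty := by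
    obtain ⟨i⟩ := hne
    exact ⟨EuclideanSpace.single i (1:ℝ), by simp [EuclideanSpace.norm_single]⟩
  obtain ⟨v0, hv0mem, hv0max⟩ := hcs.exists_isMaxOn hnes
    ((T.continuous.norm).continuousOn)
  have hv0norm : ‖v0‖ = 1 := by simpa using hv0mem
  have hTnorm : ‖T‖ = s := rfl
  have hTv0 : ‖T v0‖ = s := by
    apply le_antisymm
    · calc ‖T v0‖ ≤ ‖T‖ * ‖v0‖ := T.le_opNorm v0
        _ = s := by rw [hv0norm, mul_one, hTnorm]
    · rw [← hTnorm]
      apply ContinuousLinearMap.opNorm_le_bound _ (norm_nonneg _)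
      intro x
      rcases eq_or_ne x 0 with rfl | hx
      · simp
      · have hxs : (‖x‖⁻¹ • x) ∈ Metric.sphere (0 : EuclideanSpace ℝ n) 1 := by
          simp [norm_smul, abs_of_nonneg (inv_nonneg.mpr (norm_nonneg x)),
            inv_mul_cancel₀ (norm_ne_zero_iff.mpr hx)]
        have hmem : ‖T (‖x‖⁻¹ • x)‖ ≤ ‖T v0‖ := hv0max hxs
        have h9 : T (‖x‖⁻¹ • x) = ‖x‖⁻¹ • T x := T.map_smul _ _
        rw [h9, norm_smul, Real.norm_eq_abs,
          abs_of_nonneg (inv_nonneg.mpr (norm_nonneg x))] at hmem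
        have hxpos : (0:ℝ) < ‖x‖ := norm_pos_iff.mpr hx
        calc ‖T x‖ = ‖x‖ * (‖x‖⁻¹ * ‖T x‖) := by field_simp
          _ ≤ ‖x‖ * ‖T v0‖ := mul_le_mul_of_nonneg_left hmem (norm_nonneg x)
          _ = ‖T v0‖ * ‖x‖ := mul_comm _ _
  -- translate to vectors
  set v := (WithLp.equiv 2 (n → ℝ)) v0 with hv
  have hvv : v ⬝ᵥ v = 1 := by
    have := norm_symm_sq (n := n) v
    have hv0 : (WithLp.equiv 2 (n → ℝ)).symm v = v0 := by simp [hv]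
    rw [hv0, hv0norm] at this
    linarith
  have hTv0' : T v0 = (WithLp.equiv 2 (m → ℝ)).symm (M *ᵥ v) := rfl
  have hMv : (M *ᵥ v) ⬝ᵥ (M *ᵥ v) = s ^ 2 := by
    have := norm_symm_sq (n := m) (M *ᵥ v)
    rw [← hTv0', hTv0] at this
    linarith
  have hspos : s ≠ 0 := ne_of_gt hM
  refine ⟨s⁻¹ • (M *ᵥ v), v, ?_, hvv, ?_, ?_⟩
  · rw [smul_dotProduct, dotProduct_smul, hMv]
    simp only [smul_eq_mul]
    field_simp [sq]
  · rw [smul_smul, mul_inv_cancel₀ hspos, one_smul]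
  · set u := s⁻¹ • (M *ᵥ v) with hu
    have huu : u ⬝ᵥ u = 1 := by
      rw [hu, smul_dotProduct, dotProduct_smul, hMv]; simp only [smul_eq_mul]; field_simp [sq]
    have hMvu : M *ᵥ v = s • u := by
      rw [hu, smul_smul, mul_inv_cancel₀ hspos, one_smul]
    have hdot : (Mᵀ *ᵥ u) ⬝ᵥ v = s := by
      rw [mulVec_transpose, ← dotProduct_mulVec, hMvu, dotProduct_smul, huu]
      simp
    have hT2 : (Mᵀ *ᵥ u) ⬝ᵥ (Mᵀ *ᵥ u) ≤ s ^ 2 := by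
      have := transpose_dot_le M u
      rw [huu, mul_one] at this
      exact this
    have hw : (Mᵀ *ᵥ u - s • v) ⬝ᵥ (Mᵀ *ᵥ u - s • v) ≤ 0 := by
      have hc : (s • v) ⬝ᵥ (Mᵀ *ᵥ u) = s ^ 2 := by
        rw [smul_dotProduct, dotProduct_comm, hdot]; simp [smul_eq_mul, sq]
      have hd : (Mᵀ *ᵥ u) ⬝ᵥ (s • v) = s ^ 2 := by
        rw [dotProduct_comm]; exact hc
      have he : (s • v) ⬝ᵥ (s • v) = s ^ 2 := by
        rw [smul_dotProduct, dotProduct_smul, hvv]; simp [smul_eq_mul, sq]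
      rw [sub_dotProduct, dotProduct_sub, dotProduct_sub, hc, hd, he]
      nlinarith [hT2]
    have hw0 : Mᵀ *ᵥ u - s • v = 0 :=
      dotProduct_self_eq_zero.mp (le_antisymm hw (dot_self_nonneg _))
    exact sub_eq_zero.mp hw0


lemma sum_pi_prod {N : ℕ} {S : Fin N → Type*} [∀ i, Fintype (S i)]
    (f : ∀ i, S i → ℝ) :
    ∑ a : (∀ i, S i), ∏ i, f i (a i) = ∏ i, ∑ s, f i s := by
  rw [Finset.prod_univ_sum]
  rw [Fintype.piFinset_univ]

-- PSD of hatMatrix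
lemma hat_posSemidef {m n : ℕ} (A : Matrix (Fin m) (Fin n) ℝ) :
    (hatMatrix A).PosSemidef := by
  refine posSemidef_iff_dotProduct_mulVec.mpr ⟨?_, ?_⟩
  · -- Hermitian
    unfold hatMatrix
    ext x y
    cases x <;> cases y <;>
      simp [conjTranspose_apply, fromBlocks, one_apply, transpose_apply, mul_comm, eq_comm]
  · have key : ∀ (p : Fin m → ℝ) (q : Fin n → ℝ),
        0 ≤ star (Sum.elim p q) ⬝ᵥ (hatMatrix A *ᵥ Sum.elim p q) := by
      intro p q
      set c := matrixSpectralNorm A with hc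
      have hmv : (hatMatrix A) *ᵥ (Sum.elim p q)
          = Sum.elim (c • p + A *ᵥ q) (Aᵀ *ᵥ p + c • q) := by
        unfold hatMatrix
        rw [fromBlocks_mulVec]
        simp only [Sum.elim_comp_inl, Sum.elim_comp_inr, smul_mulVec, one_mulVec]
        rfl
      have hstar : star (Sum.elim p q) = Sum.elim p q := by simp [star_trivial]
      rw [hmv, hstar, sumElim_dotProduct_sumElim]
      have h1 : p ⬝ᵥ (c • p + A *ᵥ q) = c * (p ⬝ᵥ p) + p ⬝ᵥ (A *ᵥ q) := by
        rw [dotProduct_add, dotProduct_smul, smul_eq_mul]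
      have h2a : q ⬝ᵥ (Aᵀ *ᵥ p) = p ⬝ᵥ (A *ᵥ q) := by
        rw [mulVec_transpose, dotProduct_comm, dotProduct_mulVec]
      have h2 : q ⬝ᵥ (Aᵀ *ᵥ p + c • q) = p ⬝ᵥ (A *ᵥ q) + c * (q ⬝ᵥ q) := by
        rw [dotProduct_add, dotProduct_smul, smul_eq_mul, h2a]
      rw [h1, h2]
      have hcs : (p ⬝ᵥ (A *ᵥ q)) ^ 2 ≤ (p ⬝ᵥ p) * (c ^ 2 * (q ⬝ᵥ q)) := by
        calc (p ⬝ᵥ (A *ᵥ q)) ^ 2 ≤ (p ⬝ᵥ p) * ((A *ᵥ q) ⬝ᵥ (A *ᵥ q)) := dot_sq_le _ _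
          _ ≤ (p ⬝ᵥ p) * (c ^ 2 * (q ⬝ᵥ q)) :=
              mul_le_mul_of_nonneg_left (mulVec_dot_le A q) (dot_self_nonneg p)
      have hpp := dot_self_nonneg p
      have hqq := dot_self_nonneg q
      have hcn : 0 ≤ c := spec_nonneg A
      have habs : (2 * (p ⬝ᵥ (A *ᵥ q))) ^ 2 ≤ (c * (p ⬝ᵥ p) + c * (q ⬝ᵥ q)) ^ 2 := by
        nlinarith [hcs, sq_nonneg (c * (p ⬝ᵥ p) - c * (q ⬝ᵥ q))]
      have hsnn : 0 ≤ c * (p ⬝ᵥ p) + c * (q ⬝ᵥ q) :=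
        add_nonneg (mul_nonneg hcn hpp) (mul_nonneg hcn hqq)
      have habs2 : |2 * (p ⬝ᵥ (A *ᵥ q))| ≤ c * (p ⬝ᵥ p) + c * (q ⬝ᵥ q) := by
        rw [← Real.sqrt_sq_eq_abs]
        calc Real.sqrt ((2 * (p ⬝ᵥ (A *ᵥ q))) ^ 2)
            ≤ Real.sqrt ((c * (p ⬝ᵥ p) + c * (q ⬝ᵥ q)) ^ 2) := Real.sqrt_le_sqrt habs
          _ = c * (p ⬝ᵥ p) + c * (q ⬝ᵥ q) := Real.sqrt_sq hsnn
      have := neg_abs_le (2 * (p ⬝ᵥ (A *ᵥ q)))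
      linarith
    intro x
    have := key (x ∘ Sum.inl) (x ∘ Sum.inr)
    rwa [Sum.elim_comp_inl_inr] at this

lemma hat_factor {m n : ℕ} (A : Matrix (Fin m) (Fin n) ℝ) :
    ∃ F : Matrix (Fin m ⊕ Fin n) (Fin m ⊕ Fin n) ℝ,
      ∀ x y, hatMatrix A x y = ∑ s, F s x * F s y := by
  obtain ⟨F, hF⟩ : ∃ F : Matrix (Fin m ⊕ Fin n) (Fin m ⊕ Fin n) ℝ, hatMatrix A = star F * F := by
    open scoped MatrixOrder in
    exact CStarAlgebra.nonneg_iff_eq_star_mul_self.mp (hat_posSemidef A).nonneg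
  refine ⟨F, fun x y => ?_⟩
  rw [hF, mul_apply]
  simp [star_eq_conjTranspose, conjTranspose_apply]

lemma hat_diag {m n : ℕ} (A : Matrix (Fin m) (Fin n) ℝ) (s : Fin m ⊕ Fin n) :
    hatMatrix A s s = matrixSpectralNorm A := by
  cases s <;> simp [hatMatrix, one_apply, smul_eq_mul]

lemma hat_offdiag {m n : ℕ} (A : Matrix (Fin m) (Fin n) ℝ) (s t : Fin m ⊕ Fin n)
    (hst : s.isRight = t.isRight) (hne : s ≠ t) : hatMatrix A s t = 0 := by
  cases s <;> cases t <;> simp_all [hatMatrix, one_apply, smul_eq_mul]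

section Upper
variable {N : ℕ} {m n : Fin N → ℕ}

lemma sum_ite_ite {α : Type*} [Fintype α] [DecidableEq α] (u w : α) :
    ∑ p : α, (if p = u then (1:ℝ) else 0) * (if p = w then 1 else 0)
      = if u = w then 1 else 0 := by
  have h : ∀ p : α, (if p = u then (1:ℝ) else 0) * (if p = w then 1 else 0)
      = if p = u then (if u = w then (1:ℝ) else 0) else 0 := by
    intro p; by_cases h1 : p = u <;> by_cases h2 : p = w <;> simp_all
  simp_rw [h]
  simp [Finset.sum_ite_eq']

noncomputable def Pmat (F : ∀ i, Matrix (Fin (m i) ⊕ Fin (n i)) (Fin (m i) ⊕ Fin (n i)) ℝ) :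
    Matrix (∀ i, Fin (m i) ⊕ Fin (n i))
      ((Fin N → Bool) × (∀ i, Fin (m i) ⊕ Fin (n i))) ℝ :=
  Matrix.of fun a x =>
    (if x.1 = (fun i => (a i).isRight) then (1:ℝ) else 0) * ∏ i, F i (x.2 i) (a i)

noncomputable def Kmat (B : Matrix (Fin N → Bool) (Fin N → Bool) ℝ) :
    Matrix ((Fin N → Bool) × (∀ i, Fin (m i) ⊕ Fin (n i)))
      ((Fin N → Bool) × (∀ i, Fin (m i) ⊕ Fin (n i))) ℝ :=
  Matrix.of fun x y => B x.1 y.1 * (if x.2 = y.2 then (1:ℝ) else 0)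

variable (A : ∀ i, Matrix (Fin (m i)) (Fin (n i)) ℝ)
  (F : ∀ i, Matrix (Fin (m i) ⊕ Fin (n i)) (Fin (m i) ⊕ Fin (n i)) ℝ)
  (hF : ∀ i x y, hatMatrix (A i) x y = ∑ s, F i s x * F i s y)

include hF

lemma PPt (a b : ∀ i, Fin (m i) ⊕ Fin (n i)) :
    (Pmat F * (Pmat F)ᵀ) a b = ((∏ i, matrixSpectralNorm (A i)) • (1 : Matrix _ _ ℝ)) a b := by
  classical
  rw [mul_apply, Fintype.sum_prod_type]
  have h1 : ∀ p : Fin N → Bool, ∑ t, Pmat F a (p,t) * (Pmat F)ᵀ (p,t) b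
      = ((if p = (fun i => (a i).isRight) then (1:ℝ) else 0) *
         (if p = (fun i => (b i).isRight) then (1:ℝ) else 0)) *
          ∏ i, hatMatrix (A i) (a i) (b i) := by
    intro p
    have h2 : ∑ t : (∀ i, Fin (m i) ⊕ Fin (n i)), ∏ i, (F i (t i) (a i) * F i (t i) (b i))
        = ∏ i, hatMatrix (A i) (a i) (b i) := by
      rw [sum_pi_prod (fun i s => F i s (a i) * F i s (b i))]
      exact Finset.prod_congr rfl fun i _ => (hF i (a i) (b i)).symm
    rw [← h2, Finset.mul_sum]
    refine Finset.sum_congr rfl fun t _ => ?_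
    simp only [Pmat, of_apply, transpose_apply]
    rw [Finset.prod_mul_distrib]
    ring
  simp_rw [h1]
  rw [← Finset.sum_mul, sum_ite_ite]
  by_cases hab : a = b
  · subst hab
    simp only [if_pos rfl, one_mul, Matrix.smul_apply, Matrix.one_apply_eq, smul_eq_mul, mul_one, if_true]
    exact Finset.prod_congr rfl fun i _ => hat_diag (A i) (a i)
  · rw [Matrix.smul_apply, Matrix.one_apply_ne hab, smul_eq_mul, mul_zero]
    by_cases hpat : (fun i => (a i).isRight) = (fun i => (b i).isRight)
    · rw [if_pos hpat, one_mul]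
      obtain ⟨i, hi⟩ : ∃ i, a i ≠ b i := by
        by_contra h; push_neg at h; exact hab (funext h)
      exact Finset.prod_eq_zero (Finset.mem_univ i)
        (hat_offdiag (A i) (a i) (b i) (congrFun hpat i) hi)
    · rw [if_neg hpat, zero_mul]

lemma compEq (B : Matrix (Fin N → Bool) (Fin N → Bool) ℝ) :
    matrixComposition (m := m) (n := n) B A = Pmat F * Kmat (m := m) (n := n) B * (Pmat F)ᵀ := by
  classical
  ext a b
  rw [mul_apply]
  simp_rw [mul_apply]
  rw [Fintype.sum_prod_type]
  have h1 : ∀ (q : Fin N → Bool) (s : ∀ i, Fin (m i) ⊕ Fin (n i)),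
      (∑ x : (Fin N → Bool) × (∀ i, Fin (m i) ⊕ Fin (n i)),
        Pmat F a x * Kmat B x (q, s)) =
      B (fun i => (a i).isRight) q * ∏ i, F i (s i) (a i) := by
    intro q s
    rw [Fintype.sum_prod_type]
    have ht : ∀ p : Fin N → Bool, ∑ t : (∀ i, Fin (m i) ⊕ Fin (n i)),
        Pmat F a (p,t) * Kmat B (p,t) (q,s)
        = (if p = (fun i => (a i).isRight) then (1:ℝ) else 0)
          * (B p q * ∏ i, F i (s i) (a i)) := by
      intro p
      have hterm : ∀ t, Pmat F a (p,t) * Kmat B (p,t) (q,s)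
          = if t = s then (if p = (fun i => (a i).isRight) then (1:ℝ) else 0)
              * (B p q * ∏ i, F i (t i) (a i)) else 0 := by
        intro t
        simp only [Pmat, Kmat, of_apply]
        by_cases h : t = s
        · rw [if_pos h, if_pos h]; ring
        · rw [if_neg h, if_neg h]; ring
      simp_rw [hterm]
      rw [Finset.sum_ite_eq' Finset.univ s]
      simp
    simp_rw [ht]
    have h3 : ∀ p : Fin N → Bool, (if p = (fun i => (a i).isRight) then (1:ℝ) else 0)
        * (B p q * ∏ i, F i (s i) (a i))
        = if p = (fun i => (a i).isRight) then
            B (fun i => (a i).isRight) q * ∏ i, F i (s i) (a i) else 0 := by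
      intro p
      by_cases h : p = (fun i => (a i).isRight)
      · rw [if_pos h, if_pos h, h, one_mul]
      · rw [if_neg h, if_neg h, zero_mul]
    simp_rw [h3]
    rw [Finset.sum_ite_eq' Finset.univ]
    simp
  simp_rw [h1]
  have h2 : ∀ q : Fin N → Bool, ∑ s : (∀ i, Fin (m i) ⊕ Fin (n i)),
      (B (fun i => (a i).isRight) q * ∏ i, F i (s i) (a i)) * (Pmat F)ᵀ (q, s) b
      = (if q = (fun i => (b i).isRight) then (1:ℝ) else 0)
        * (B (fun i => (a i).isRight) q * ∏ i, hatMatrix (A i) (a i) (b i)) := by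
    intro q
    have hsum : ∑ s : (∀ i, Fin (m i) ⊕ Fin (n i)), ∏ i, (F i (s i) (a i) * F i (s i) (b i))
        = ∏ i, hatMatrix (A i) (a i) (b i) := by
      rw [sum_pi_prod (fun i s => F i s (a i) * F i s (b i))]
      exact Finset.prod_congr rfl fun i _ => (hF i (a i) (b i)).symm
    rw [← hsum, Finset.mul_sum, Finset.mul_sum]
    refine Finset.sum_congr rfl fun s _ => ?_
    simp only [Pmat, of_apply, transpose_apply]
    rw [Finset.prod_mul_distrib]
    ring
  simp_rw [h2]
  have h4 : ∀ q : Fin N → Bool, (if q = (fun i => (b i).isRight) then (1:ℝ) else 0)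
      * (B (fun i => (a i).isRight) q * ∏ i, hatMatrix (A i) (a i) (b i))
      = if q = (fun i => (b i).isRight) then
          B (fun i => (a i).isRight) (fun i => (b i).isRight)
            * ∏ i, hatMatrix (A i) (a i) (b i) else 0 := by
    intro q
    by_cases h : q = (fun i => (b i).isRight)
    · rw [if_pos h, if_pos h, h, one_mul]
    · rw [if_neg h, if_neg h, zero_mul]
  simp_rw [h4]
  rw [Finset.sum_ite_eq' Finset.univ]
  simp [matrixComposition]

omit hF in
lemma Kmat_bound (B : Matrix (Fin N → Bool) (Fin N → Bool) ℝ)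
    (z : ((Fin N → Bool) × (∀ i, Fin (m i) ⊕ Fin (n i))) → ℝ) :
    (Kmat (m := m) (n := n) B *ᵥ z) ⬝ᵥ (Kmat B *ᵥ z) ≤ matrixSpectralNorm B ^ 2 * (z ⬝ᵥ z) := by
  classical
  have hmv : ∀ (p : Fin N → Bool) (t : ∀ i, Fin (m i) ⊕ Fin (n i)),
      (Kmat (m := m) (n := n) B *ᵥ z) (p, t) = (B *ᵥ (fun q => z (q, t))) p := by
    intro p t
    simp only [mulVec, dotProduct, Kmat, of_apply, Fintype.sum_prod_type]
    refine Finset.sum_congr rfl fun q _ => ?_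
    have hterm : ∀ s : (∀ i, Fin (m i) ⊕ Fin (n i)),
        B p q * (if t = s then (1:ℝ) else 0) * z (q,s)
        = if s = t then B p q * z (q,t) else 0 := by
      intro s
      by_cases h : s = t
      · subst h; simp
      · rw [if_neg h, if_neg (fun hh => h hh.symm), mul_zero, zero_mul]
    simp_rw [hterm]
    rw [Finset.sum_ite_eq' Finset.univ t]
    simp
  have e : (Kmat (m := m) (n := n) B *ᵥ z) ⬝ᵥ (Kmat B *ᵥ z)
      = ∑ t : (∀ i, Fin (m i) ⊕ Fin (n i)),
        (B *ᵥ (fun q => z (q,t))) ⬝ᵥ (B *ᵥ (fun q => z (q,t))) := by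
    simp only [dotProduct]
    rw [Fintype.sum_prod_type, Finset.sum_comm]
    exact Finset.sum_congr rfl fun t _ => Finset.sum_congr rfl fun p _ => by rw [hmv]
  have e2 : z ⬝ᵥ z = ∑ t : (∀ i, Fin (m i) ⊕ Fin (n i)),
      (fun q => z (q,t)) ⬝ᵥ (fun q => z (q,t)) := by
    simp only [dotProduct]
    rw [Fintype.sum_prod_type, Finset.sum_comm]
  rw [e, e2, Finset.mul_sum]
  exact Finset.sum_le_sum fun t _ => mulVec_dot_le B _

lemma upper (B : Matrix (Fin N → Bool) (Fin N → Bool) ℝ) :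
    matrixSpectralNorm (matrixComposition (m := m) (n := n) B A)
      ≤ matrixSpectralNorm B * ∏ i, matrixSpectralNorm (A i) := by
  classical
  set c := ∏ i, matrixSpectralNorm (A i) with hcdef
  set β := matrixSpectralNorm B with hβdef
  have hcnn : 0 ≤ c := Finset.prod_nonneg fun i _ => spec_nonneg _
  have hβnn : 0 ≤ β := spec_nonneg _
  have hPPt : Pmat F * (Pmat F)ᵀ = c • (1 : Matrix (∀ i, Fin (m i) ⊕ Fin (n i)) _ ℝ) := by
    ext a b; exact PPt A F hF a b
  have hPt : ∀ x : (∀ i, Fin (m i) ⊕ Fin (n i)) → ℝ,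
      ((Pmat F)ᵀ *ᵥ x) ⬝ᵥ ((Pmat F)ᵀ *ᵥ x) = c * (x ⬝ᵥ x) := by
    intro x
    rw [mulVec_transpose, ← dotProduct_mulVec, mulVec_vecMul, hPPt,
      smul_mulVec, one_mulVec, dotProduct_smul, smul_eq_mul]
  have hP : ∀ y : ((Fin N → Bool) × (∀ i, Fin (m i) ⊕ Fin (n i))) → ℝ,
      (Pmat F *ᵥ y) ⬝ᵥ (Pmat F *ᵥ y) ≤ c * (y ⬝ᵥ y) := by
    intro y
    set w := Pmat F *ᵥ y with hw
    have h1 : w ⬝ᵥ w = ((Pmat F)ᵀ *ᵥ w) ⬝ᵥ y := by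
      rw [hw, mulVec_transpose, ← dotProduct_mulVec]
    have h2 : (((Pmat F)ᵀ *ᵥ w) ⬝ᵥ y) ^ 2
        ≤ (((Pmat F)ᵀ *ᵥ w) ⬝ᵥ ((Pmat F)ᵀ *ᵥ w)) * (y ⬝ᵥ y) := dot_sq_le _ _
    rw [hPt w] at h2
    have h3 := dot_self_nonneg w
    have h4 := dot_self_nonneg y
    by_cases h0 : w ⬝ᵥ w = 0
    · rw [h0]; exact mul_nonneg hcnn h4
    · have hpos : 0 < w ⬝ᵥ w := lt_of_le_of_ne h3 (Ne.symm h0)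
      nlinarith [h1, h2, hpos]
  apply spec_le _ (mul_nonneg hβnn hcnn)
  intro x
  rw [compEq A F hF B, ← mulVec_mulVec, ← mulVec_mulVec]
  calc (Pmat F *ᵥ (Kmat B *ᵥ ((Pmat F)ᵀ *ᵥ x))) ⬝ᵥ (Pmat F *ᵥ (Kmat B *ᵥ ((Pmat F)ᵀ *ᵥ x)))
      ≤ c * ((Kmat B *ᵥ ((Pmat F)ᵀ *ᵥ x)) ⬝ᵥ (Kmat B *ᵥ ((Pmat F)ᵀ *ᵥ x))) := hP _
    _ ≤ c * (β ^ 2 * (((Pmat F)ᵀ *ᵥ x) ⬝ᵥ ((Pmat F)ᵀ *ᵥ x))) :=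
        mul_le_mul_of_nonneg_left (Kmat_bound B _) hcnn
    _ = c * (β ^ 2 * (c * (x ⬝ᵥ x))) := by rw [hPt x]
    _ = (β * c) ^ 2 * (x ⬝ᵥ x) := by ring

end Upper


lemma prod_bool_ite {N : ℕ} (p q : Fin N → Bool) :
    ∏ i, (if p i = q i then (1:ℝ) else 0) = if p = q then 1 else 0 := by
  by_cases h : p = q
  · subst h; simp
  · rw [if_neg h]
    obtain ⟨i, hi⟩ : ∃ i, p i ≠ q i := by
      by_contra hc; push_neg at hc; exact h (funext hc)
    exact Finset.prod_eq_zero (Finset.mem_univ i) (if_neg hi)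

lemma dot_mulVec_expand {n m : Type*} [Fintype n] [Fintype m]
    (x : m → ℝ) (M : Matrix m n ℝ) (y : n → ℝ) :
    x ⬝ᵥ (M *ᵥ y) = ∑ s, ∑ t, x s * M s t * y t := by
  simp [dotProduct, mulVec, Finset.mul_sum, mul_assoc]

lemma key_sum {N : ℕ} {S : Fin N → Type*} [∀ i, Fintype (S i)]
    (f g : (Fin N → Bool) → ℝ) (G H : ∀ i, Bool → S i → ℝ) :
    ∑ a : (∀ i, S i),
        (∑ p : Fin N → Bool, f p * ∏ i, G i (p i) (a i)) *
        (∑ q : Fin N → Bool, g q * ∏ i, H i (q i) (a i))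
      = ∑ p : Fin N → Bool, ∑ q : Fin N → Bool,
          (f p * g q) * ∏ i, (∑ s, G i (p i) s * H i (q i) s) := by
  calc ∑ a : (∀ i, S i),
        (∑ p : Fin N → Bool, f p * ∏ i, G i (p i) (a i)) *
        (∑ q : Fin N → Bool, g q * ∏ i, H i (q i) (a i))
      = ∑ a : (∀ i, S i), ∑ p : Fin N → Bool, ∑ q : Fin N → Bool,
          (f p * ∏ i, G i (p i) (a i)) * (g q * ∏ i, H i (q i) (a i)) := by
        exact Finset.sum_congr rfl fun a _ => Finset.sum_mul_sum _ _ _ _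
    _ = ∑ p : Fin N → Bool, ∑ a : (∀ i, S i), ∑ q : Fin N → Bool,
          (f p * ∏ i, G i (p i) (a i)) * (g q * ∏ i, H i (q i) (a i)) := Finset.sum_comm
    _ = ∑ p : Fin N → Bool, ∑ q : Fin N → Bool, ∑ a : (∀ i, S i),
          (f p * ∏ i, G i (p i) (a i)) * (g q * ∏ i, H i (q i) (a i)) :=
        Finset.sum_congr rfl fun p _ => Finset.sum_comm
    _ = ∑ p : Fin N → Bool, ∑ q : Fin N → Bool,
          (f p * g q) * ∑ a : (∀ i, S i), ∏ i, (G i (p i) (a i) * H i (q i) (a i)) := by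
        refine Finset.sum_congr rfl fun p _ => Finset.sum_congr rfl fun q _ => ?_
        rw [Finset.mul_sum]
        refine Finset.sum_congr rfl fun a _ => ?_
        rw [Finset.prod_mul_distrib]; ring
    _ = ∑ p : Fin N → Bool, ∑ q : Fin N → Bool,
          (f p * g q) * ∏ i, (∑ s, G i (p i) s * H i (q i) s) := by
        refine Finset.sum_congr rfl fun p _ => Finset.sum_congr rfl fun q _ => ?_
        rw [sum_pi_prod (fun i s => G i (p i) s * H i (q i) s)]

lemma key_sum2 {N : ℕ} {S : Fin N → Type*} [∀ i, Fintype (S i)]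
    (W : (Fin N → Bool) → (Fin N → Bool) → ℝ)
    (G H : ∀ i, Bool → S i → ℝ) (M : ∀ i, S i → S i → ℝ) :
    ∑ a : (∀ i, S i), ∑ b : (∀ i, S i), ∑ p : Fin N → Bool, ∑ q : Fin N → Bool,
        W p q * ((∏ i, G i (p i) (a i)) * (∏ i, M i (a i) (b i))
          * (∏ i, H i (q i) (b i)))
      = ∑ p : Fin N → Bool, ∑ q : Fin N → Bool,
          W p q * ∏ i, (∑ s, ∑ t, G i (p i) s * M i s t * H i (q i) t) := by
  have hswap : ∑ a : (∀ i, S i), ∑ b : (∀ i, S i), ∑ p : Fin N → Bool, ∑ q : Fin N → Bool,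
        W p q * ((∏ i, G i (p i) (a i)) * (∏ i, M i (a i) (b i))
          * (∏ i, H i (q i) (b i)))
      = ∑ p : Fin N → Bool, ∑ q : Fin N → Bool, ∑ a : (∀ i, S i), ∑ b : (∀ i, S i),
        W p q * ((∏ i, G i (p i) (a i)) * (∏ i, M i (a i) (b i))
          * (∏ i, H i (q i) (b i))) := by
    calc _ = ∑ a : (∀ i, S i), ∑ p : Fin N → Bool, ∑ b : (∀ i, S i), ∑ q : Fin N → Bool,
          W p q * ((∏ i, G i (p i) (a i)) * (∏ i, M i (a i) (b i))
            * (∏ i, H i (q i) (b i))) :=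
          Finset.sum_congr rfl fun a _ => Finset.sum_comm
      _ = ∑ p : Fin N → Bool, ∑ a : (∀ i, S i), ∑ b : (∀ i, S i), ∑ q : Fin N → Bool,
          W p q * ((∏ i, G i (p i) (a i)) * (∏ i, M i (a i) (b i))
            * (∏ i, H i (q i) (b i))) := Finset.sum_comm
      _ = ∑ p : Fin N → Bool, ∑ a : (∀ i, S i), ∑ q : Fin N → Bool, ∑ b : (∀ i, S i),
          W p q * ((∏ i, G i (p i) (a i)) * (∏ i, M i (a i) (b i))
            * (∏ i, H i (q i) (b i))) :=
          Finset.sum_congr rfl fun p _ => Finset.sum_congr rfl fun a _ => Finset.sum_comm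
      _ = ∑ p : Fin N → Bool, ∑ q : Fin N → Bool, ∑ a : (∀ i, S i), ∑ b : (∀ i, S i),
          W p q * ((∏ i, G i (p i) (a i)) * (∏ i, M i (a i) (b i))
            * (∏ i, H i (q i) (b i))) :=
          Finset.sum_congr rfl fun p _ => Finset.sum_comm
  rw [hswap]
  refine Finset.sum_congr rfl fun p _ => Finset.sum_congr rfl fun q _ => ?_
  have hb : ∀ a : (∀ i, S i), ∑ b : (∀ i, S i), ∏ i, (M i (a i) (b i) * H i (q i) (b i))
      = ∏ i, ∑ t, (M i (a i) t * H i (q i) t) := fun a =>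
    sum_pi_prod (fun i t => M i (a i) t * H i (q i) t)
  have hA : ∀ a : (∀ i, S i), ∑ b : (∀ i, S i),
      W p q * ((∏ i, G i (p i) (a i)) * (∏ i, M i (a i) (b i))
        * (∏ i, H i (q i) (b i)))
      = W p q * ∏ i, (G i (p i) (a i) * ∑ t, (M i (a i) t * H i (q i) t)) := by
    intro a
    rw [Finset.prod_mul_distrib, ← hb a, Finset.mul_sum, Finset.mul_sum]
    refine Finset.sum_congr rfl fun b _ => ?_
    rw [Finset.prod_mul_distrib (f := fun i => M i (a i) (b i))]
    ring
  simp_rw [hA]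
  rw [← Finset.mul_sum,
    sum_pi_prod (fun i s => G i (p i) s * ∑ t, (M i s t * H i (q i) t))]
  congr 1
  refine Finset.prod_congr rfl fun i _ => ?_
  refine Finset.sum_congr rfl fun s _ => ?_
  rw [Finset.mul_sum]
  refine Finset.sum_congr rfl fun t _ => ?_
  ring

lemma hat_mulVec {m n : ℕ} (A : Matrix (Fin m) (Fin n) ℝ) (p : Fin m → ℝ) (q : Fin n → ℝ) :
    hatMatrix A *ᵥ Sum.elim p q
      = Sum.elim (matrixSpectralNorm A • p + A *ᵥ q) (Aᵀ *ᵥ p + matrixSpectralNorm A • q) := by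
  unfold hatMatrix
  rw [fromBlocks_mulVec]
  simp only [Sum.elim_comp_inl, Sum.elim_comp_inr, smul_mulVec, one_mulVec]

lemma lower {N : ℕ} {m n : Fin N → ℕ}
    (B : Matrix (Fin N → Bool) (Fin N → Bool) ℝ)
    (A : ∀ i, Matrix (Fin (m i)) (Fin (n i)) ℝ) :
    matrixSpectralNorm B * ∏ i, matrixSpectralNorm (A i)
      ≤ matrixSpectralNorm (matrixComposition B A) := by
  classical
  rcases le_or_gt (matrixSpectralNorm B * ∏ i, matrixSpectralNorm (A i)) 0 with h | h
  · exact h.trans (spec_nonneg _)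
  have hβpos : 0 < matrixSpectralNorm B := by
    rcases (spec_nonneg B).eq_or_lt with h0 | h0
    · exfalso; rw [← h0, zero_mul] at h; exact lt_irrefl _ h
    · exact h0
  have hApos : ∀ i, 0 < matrixSpectralNorm (A i) := by
    intro i
    rcases (spec_nonneg (A i)).eq_or_lt with h0 | h0
    · exfalso
      have hz : ∏ j, matrixSpectralNorm (A j) = 0 :=
        Finset.prod_eq_zero (Finset.mem_univ i) h0.symm
      rw [hz, mul_zero] at h; exact lt_irrefl _ h
    · exact h0
  obtain ⟨φ, ψ, hφ, hψ, hBv, hBt⟩ := exists_singular B hβpos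
  choose u v hu hv hAv hAt using fun i => exists_singular (A i) (hApos i)
  set z : ∀ i, Bool → (Fin (m i) ⊕ Fin (n i)) → ℝ := fun i b =>
    if b then Sum.elim 0 (v i) else Sum.elim (u i) 0 with hz
  have F1 : ∀ i (b b' : Bool), z i b ⬝ᵥ z i b' = if b = b' then 1 else 0 := by
    intro i b b'
    cases b <;> cases b' <;>
      simp [hz, sumElim_dotProduct_sumElim, hu i, hv i]
  have hatz : ∀ i (b : Bool), hatMatrix (A i) *ᵥ z i b
      = Sum.elim (matrixSpectralNorm (A i) • u i) (matrixSpectralNorm (A i) • v i) := by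
    intro i b
    cases b
    · show hatMatrix (A i) *ᵥ Sum.elim (u i) 0 = _
      rw [hat_mulVec, mulVec_zero, add_zero, hAt i]
      congr 1
      rw [smul_zero, add_zero]
    · show hatMatrix (A i) *ᵥ Sum.elim 0 (v i) = _
      rw [hat_mulVec, mulVec_zero, zero_add, hAv i]
      congr 1
      rw [smul_zero, zero_add]
  have F2 : ∀ i (b b' : Bool),
      ∑ s, ∑ t, z i b s * hatMatrix (A i) s t * z i b' t = matrixSpectralNorm (A i) := by
    intro i b b'
    rw [← dot_mulVec_expand, hatz i b']
    cases b <;>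
      simp [hz, sumElim_dotProduct_sumElim, dotProduct_smul, hu i, hv i, smul_eq_mul]
  have F3 : ∀ i (b : Bool) s, (Sum.isRight s) ≠ b → z i b s = 0 := by
    intro i b s hs
    cases b <;> cases s <;> first | exact absurd rfl hs | simp [hz]
  set ξ : (∀ i, Fin (m i) ⊕ Fin (n i)) → ℝ :=
    fun a => ∑ p : Fin N → Bool, φ p * ∏ i, z i (p i) (a i) with hξ
  set η : (∀ i, Fin (m i) ⊕ Fin (n i)) → ℝ :=
    fun b => ∑ q : Fin N → Bool, ψ q * ∏ i, z i (q i) (b i) with hη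
  have collapse : ∀ (w : (Fin N → Bool) → ℝ),
      (∑ p : Fin N → Bool, ∑ q : Fin N → Bool,
        (w p * w q) * ∏ i, (∑ s, z i (p i) s * z i (q i) s)) = w ⬝ᵥ w := by
    intro w
    have h1 : ∀ p q : Fin N → Bool,
        (w p * w q) * ∏ i, (∑ s, z i (p i) s * z i (q i) s)
        = if q = p then w p * w p else 0 := by
      intro p q
      have h2 : ∏ i, (∑ s, z i (p i) s * z i (q i) s) = if p = q then 1 else 0 := by
        rw [← prod_bool_ite p q]
        exact Finset.prod_congr rfl fun i _ => F1 i (p i) (q i)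
      rw [h2]
      by_cases hq : q = p
      · subst hq; simp
      · rw [if_neg hq, if_neg (fun hh => hq hh.symm), mul_zero]
    simp_rw [h1]
    simp [Finset.sum_ite_eq' Finset.univ, dotProduct]
  have hξnorm : ξ ⬝ᵥ ξ = 1 := by
    rw [show ξ ⬝ᵥ ξ = ∑ a, ξ a * ξ a from rfl, hξ]
    rw [key_sum φ φ z z, collapse φ, hφ]
  have hηnorm : η ⬝ᵥ η = 1 := by
    rw [show η ⬝ᵥ η = ∑ a, η a * η a from rfl, hη]
    rw [key_sum ψ ψ z z, collapse ψ, hψ]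
  have hbil : ξ ⬝ᵥ (matrixComposition B A *ᵥ η)
      = matrixSpectralNorm B * ∏ i, matrixSpectralNorm (A i) := by
    have step1 : ξ ⬝ᵥ (matrixComposition B A *ᵥ η)
        = ∑ a : (∀ i, Fin (m i) ⊕ Fin (n i)), ∑ b : (∀ i, Fin (m i) ⊕ Fin (n i)),
            ∑ p : Fin N → Bool, ∑ q : Fin N → Bool,
            (φ p * ψ q * B (fun i => (a i).isRight) (fun i => (b i).isRight)) *
              ((∏ i, z i (p i) (a i)) * (∏ i, hatMatrix (A i) (a i) (b i))
                * (∏ i, z i (q i) (b i))) := by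
      rw [show ξ ⬝ᵥ (matrixComposition B A *ᵥ η)
          = ∑ a, ξ a * ∑ b, matrixComposition B A a b * η b from rfl]
      refine Finset.sum_congr rfl fun a _ => ?_
      rw [Finset.mul_sum]
      refine Finset.sum_congr rfl fun b _ => ?_
      rw [hξ, hη]
      simp only [matrixComposition, of_apply]
      rw [Finset.sum_mul]
      refine Finset.sum_congr rfl fun p _ => ?_
      rw [Finset.mul_sum, Finset.mul_sum]
      refine Finset.sum_congr rfl fun q _ => ?_
      ring
    have repl : ∀ (p q : Fin N → Bool) (a b : ∀ i, Fin (m i) ⊕ Fin (n i)),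
        (φ p * ψ q * B (fun i => (a i).isRight) (fun i => (b i).isRight)) *
          ((∏ i, z i (p i) (a i)) * (∏ i, hatMatrix (A i) (a i) (b i))
            * (∏ i, z i (q i) (b i)))
        = (φ p * ψ q * B p q) *
          ((∏ i, z i (p i) (a i)) * (∏ i, hatMatrix (A i) (a i) (b i))
            * (∏ i, z i (q i) (b i))) := by
      intro p q a b
      by_cases hpa : (fun i => (a i).isRight) = p
      · by_cases hpb : (fun i => (b i).isRight) = q
        · rw [hpa, hpb]
        · obtain ⟨i, hi⟩ : ∃ i, (b i).isRight ≠ q i := by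
            by_contra hc; push_neg at hc; exact hpb (funext hc)
          have h0 : ∏ i, z i (q i) (b i) = 0 :=
            Finset.prod_eq_zero (Finset.mem_univ i) (F3 i (q i) (b i) hi)
          rw [h0]; ring
      · obtain ⟨i, hi⟩ : ∃ i, (a i).isRight ≠ p i := by
          by_contra hc; push_neg at hc; exact hpa (funext hc)
        have h0 : ∏ i, z i (p i) (a i) = 0 :=
          Finset.prod_eq_zero (Finset.mem_univ i) (F3 i (p i) (a i) hi)
        rw [h0]; ring
    rw [step1]
    simp_rw [repl]
    rw [key_sum2 (fun p q => φ p * ψ q * B p q) z z (fun i => hatMatrix (A i))]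
    have hinner : ∀ (p q : Fin N → Bool),
        (∏ i, ∑ s, ∑ t, z i (p i) s * hatMatrix (A i) s t * z i (q i) t)
        = ∏ i, matrixSpectralNorm (A i) :=
      fun p q => Finset.prod_congr rfl fun i _ => F2 i (p i) (q i)
    simp_rw [hinner]
    have hBsum : ∑ p : Fin N → Bool, ∑ q : Fin N → Bool, φ p * B p q * ψ q
        = matrixSpectralNorm B := by
      rw [← dot_mulVec_expand φ B ψ, hBv, dotProduct_smul, hφ, smul_eq_mul, mul_one]
    calc ∑ p : Fin N → Bool, ∑ q : Fin N → Bool,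
          (φ p * ψ q * B p q) * ∏ i, matrixSpectralNorm (A i)
        = (∑ p : Fin N → Bool, ∑ q : Fin N → Bool, φ p * B p q * ψ q)
            * ∏ i, matrixSpectralNorm (A i) := by
          rw [Finset.sum_mul]
          refine Finset.sum_congr rfl fun p _ => ?_
          rw [Finset.sum_mul]
          refine Finset.sum_congr rfl fun q _ => ?_
          ring
      _ = matrixSpectralNorm B * ∏ i, matrixSpectralNorm (A i) := by rw [hBsum]
  have hfinal := le_spec (matrixComposition B A) η ξ hηnorm hξnorm
  rw [hbil] at hfinal
  exact hfinal


end SpecAux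

/-- For the matrix composition `C` of a symmetric matrix `B` with `A_1, …, A_N`:
`‖C‖ = ‖B‖ · ∏ i ‖A_i‖` exactly. -/
theorem stmt9 {N : ℕ} {m n : Fin N → ℕ}
    (B : Matrix (Fin N → Bool) (Fin N → Bool) ℝ) (hB : B.IsSymm)
    (A : ∀ i, Matrix (Fin (m i)) (Fin (n i)) ℝ) :
    matrixSpectralNorm (matrixComposition B A) = matrixSpectralNorm B * ∏ i, matrixSpectralNorm (A i) := by
  classical
  choose F hF using fun i => SpecAux.hat_factor (A i)
  exact le_antisymm (SpecAux.upper A F hF B) (SpecAux.lower B A)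
end
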